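/- Under the stabilization hypotheses (ε − ε_* , μ − μ_* ∈ W^2_1(ℝ), coefficients bounded above and below by positive constants), the potential V(y) = η(y)² − η'(y) + λ ε̃^{-1} μ̃^{-1} satisfies V − λ/(ε_* μ_*) ∈ L¹(ℝ) for every λ ≥ 0. -/

import Mathlib

open MeasureTheory

lemma aux_not_integrable_of_le (f : ℝ → ℝ) (c : ℝ) (hc : 0 < c)
    (h : ∀ w, c ≤ f w) (hf : Integrable f volume) : False := by
  have hconst : Integrable (fun _ : ℝ => c) volume := by
    refine hf.abs.mono' aestronglyMeasurable_const (Filter.Eventually.of_forall fun w => ?_)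
    simp only [Real.norm_eq_abs, abs_of_pos hc]
    exact (h w).trans (le_abs_self _)
  rw [integrable_const_iff] at hconst
  rcases hconst with h1 | h2
  · exact hc.ne' h1
  · simpa [Real.volume_univ] using h2.measure_univ_lt_top

lemma aux_bounded_of_deriv_integrable (f f' : ℝ → ℝ)
    (hd : ∀ w, HasDerivAt f (f' w) w) (hi : Integrable f' volume) :
    ∃ M, 0 ≤ M ∧ ∀ w, |f w| ≤ M := by
  refine ⟨|f 0| + ∫ w, |f' w|, ?_, fun w => ?_⟩
  · exact add_nonneg (abs_nonneg _) (integral_nonneg fun w => abs_nonneg _)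
  have hFTC : ∫ t in (0:ℝ)..w, f' t = f w - f 0 :=
    intervalIntegral.integral_eq_sub_of_hasDerivAt (fun t _ => hd t)
      hi.intervalIntegrable
  have h1 : |f w - f 0| ≤ ∫ t, |f' t| := by
    rw [← hFTC]
    calc |∫ t in (0:ℝ)..w, f' t| ≤ ∫ t in Set.uIoc 0 w, |f' t| := by
          simpa [Real.norm_eq_abs] using
            (intervalIntegral.norm_integral_le_integral_norm_uIoc (f := f') (a := 0) (b := w)
              (μ := volume))
      _ ≤ ∫ t, |f' t| := setIntegral_le_integral hi.abs
          (Filter.Eventually.of_forall fun t => abs_nonneg _)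
  calc |f w| = |f 0 + (f w - f 0)| := by ring_nf
    _ ≤ |f 0| + |f w - f 0| := abs_add_le _ _
    _ ≤ |f 0| + ∫ t, |f' t| := by linarith

lemma aux_quot_bound (a a' a'' e₀ e₁ M : ℝ) (h0 : 0 < e₀) (hle : e₀ ≤ a) (hua : a ≤ e₁)
    (hM : |a'| ≤ M) :
    |(a'' * a - a' * a') / a ^ 2| ≤ (|a''| * e₁ + M * |a'|) / e₀ ^ 2 := by
  have ha : 0 < a := h0.trans_le hle
  rw [abs_div, abs_of_pos (by positivity : (0:ℝ) < a ^ 2)]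
  apply div_le_div₀
    (add_nonneg (mul_nonneg (abs_nonneg _) ((h0.trans_le (hle.trans hua)).le))
      (mul_nonneg ((abs_nonneg a').trans hM) (abs_nonneg _)))
  · calc |a'' * a - a' * a'| ≤ |a'' * a| + |a' * a'| := abs_sub _ _
      _ = |a''| * |a| + |a'| * |a'| := by rw [abs_mul, abs_mul]
      _ ≤ |a''| * e₁ + M * |a'| := by
          have := abs_nonneg a'
          have := abs_nonneg a''
          have : |a| ≤ e₁ := by rw [abs_of_pos ha]; exact hua
          nlinarith [abs_nonneg a', abs_nonneg a'']
  · positivity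
  · exact pow_le_pow_left₀ h0.le hle 2


/-- Under the stabilization hypotheses (`ε̃ − ε_*, μ̃ − μ_* ∈ W²₁(ℝ)`
for the Liouville-transformed coefficients, which are bounded above and below by
positive constants), the potential `V = η² − η' + λ ε̃⁻¹ μ̃⁻¹`, with
`η = (1/4)(ε̃'/ε̃ − μ̃'/μ̃) = ν'/ν`, `ν = ε̃^{1/4} μ̃^{-1/4}`, satisfies
`V − λ/(ε_* μ_*) ∈ L¹(ℝ)` for every `λ ≥ 0`. -/
theorem potential_stabilizes_L1
    (εt μt εt' μt' εt'' μt'' : ℝ → ℝ) (ε₀ ε₁ μ₀ μ₁ εs μs l : ℝ)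
    (hε₀ : 0 < ε₀) (hμ₀ : 0 < μ₀) (hl : 0 ≤ l)
    (hεb : ∀ w, ε₀ ≤ εt w ∧ εt w ≤ ε₁) (hμb : ∀ w, μ₀ ≤ μt w ∧ μt w ≤ μ₁)
    (hdε : ∀ w, HasDerivAt εt (εt' w) w) (hdε' : ∀ w, HasDerivAt εt' (εt'' w) w)
    (hdμ : ∀ w, HasDerivAt μt (μt' w) w) (hdμ' : ∀ w, HasDerivAt μt' (μt'' w) w)
    (hεW : Integrable (fun w => εt w - εs) volume ∧ Integrable εt' volume ∧
      Integrable εt'' volume)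
    (hμW : Integrable (fun w => μt w - μs) volume ∧ Integrable μt' volume ∧
      Integrable μt'' volume)
    (ν η V : ℝ → ℝ)
    (hν : ∀ w, ν w = εt w ^ ((1:ℝ)/4) * μt w ^ (-(1:ℝ)/4))
    (hη : ∀ w, η w = deriv ν w / ν w)
    (hV : ∀ w, V w = (η w) ^ 2 - deriv η w + l / (εt w * μt w)) :
    Integrable (fun w => V w - l / (εs * μs)) volume := by
  -- basic positivity
  have hεpos : ∀ w, 0 < εt w := fun w => hε₀.trans_le (hεb w).1
  have hμpos : ∀ w, 0 < μt w := fun w => hμ₀.trans_le (hμb w).1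
  have hεne : ∀ w, εt w ≠ 0 := fun w => (hεpos w).ne'
  have hμne : ∀ w, μt w ≠ 0 := fun w => (hμpos w).ne'
  -- bounds on εs, μs
  have hεs₀ : ε₀ ≤ εs := by
    by_contra hcon
    push_neg at hcon
    exact aux_not_integrable_of_le _ (ε₀ - εs) (by linarith)
      (fun w => by have := (hεb w).1; linarith) hεW.1
  have hεs₁ : εs ≤ ε₁ := by
    by_contra hcon
    push_neg at hcon
    exact aux_not_integrable_of_le (fun w => -(εt w - εs)) (εs - ε₁) (by linarith)
      (fun w => by have := (hεb w).2; simp; linarith) hεW.1.neg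
  have hμs₀ : μ₀ ≤ μs := by
    by_contra hcon
    push_neg at hcon
    exact aux_not_integrable_of_le _ (μ₀ - μs) (by linarith)
      (fun w => by have := (hμb w).1; linarith) hμW.1
  have hμs₁ : μs ≤ μ₁ := by
    by_contra hcon
    push_neg at hcon
    exact aux_not_integrable_of_le (fun w => -(μt w - μs)) (μs - μ₁) (by linarith)
      (fun w => by have := (hμb w).2; simp; linarith) hμW.1.neg
  -- derivative of ν
  have hνf : ν = fun w => εt w ^ ((1:ℝ)/4) * μt w ^ (-(1:ℝ)/4) := funext hν
  have hdν : ∀ w, HasDerivAt ν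
      (εt' w * ((1:ℝ)/4) * εt w ^ ((1:ℝ)/4 - 1) * μt w ^ (-(1:ℝ)/4)
        + εt w ^ ((1:ℝ)/4) * (μt' w * (-(1:ℝ)/4) * μt w ^ (-(1:ℝ)/4 - 1))) w := by
    intro w
    rw [hνf]
    exact ((hdε w).rpow_const (Or.inl (hεne w))).mul
      ((hdμ w).rpow_const (Or.inl (hμne w)))
  -- closed form of η
  have hηf : ∀ w, η w = (εt' w / εt w - μt' w / μt w) / 4 := by
    intro w
    rw [hη w, (hdν w).deriv, hν w]
    have h1 : εt w ^ ((1:ℝ)/4 - 1) = εt w ^ ((1:ℝ)/4) / εt w := by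
      rw [Real.rpow_sub (hεpos w), Real.rpow_one]
    have h2 : μt w ^ (-(1:ℝ)/4 - 1) = μt w ^ (-(1:ℝ)/4) / μt w := by
      rw [Real.rpow_sub (hμpos w), Real.rpow_one]
    have hA : εt w ^ ((1:ℝ)/4) ≠ 0 := (Real.rpow_pos_of_pos (hεpos w) _).ne'
    have hB : μt w ^ (-(1:ℝ)/4) ≠ 0 := (Real.rpow_pos_of_pos (hμpos w) _).ne'
    rw [h1, h2]
    have := hεne w
    have := hμne w
    field_simp
    have hBB : μt w ^ (-((1:ℝ)/4)) * (μt w ^ (-((1:ℝ)/4)))⁻¹ = 1 :=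
      mul_inv_cancel₀ (Real.rpow_pos_of_pos (hμpos w) _).ne'
    linear_combination (εt' w * μt w - εt w * μt' w) * hBB
  have hη_eq : η = fun w => (εt' w / εt w - μt' w / μt w) / 4 := funext hηf
  -- derivative of η
  have hdη : ∀ w, HasDerivAt η
      (((εt'' w * εt w - εt' w * εt' w) / εt w ^ 2
        - (μt'' w * μt w - μt' w * μt' w) / μt w ^ 2) / 4) w := by
    intro w
    rw [hη_eq]
    exact (((hdε' w).div (hdε w) (hεne w)).sub
      ((hdμ' w).div (hdμ w) (hμne w))).div_const 4
  have hdη_eq : deriv η = fun w =>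
      ((εt'' w * εt w - εt' w * εt' w) / εt w ^ 2
        - (μt'' w * μt w - μt' w * μt' w) / μt w ^ 2) / 4 :=
    funext fun w => (hdη w).deriv
  -- continuity
  have dεt : Differentiable ℝ εt := fun w => (hdε w).differentiableAt
  have dμt : Differentiable ℝ μt := fun w => (hdμ w).differentiableAt
  have dεt' : Differentiable ℝ εt' := fun w => (hdε' w).differentiableAt
  have dμt' : Differentiable ℝ μt' := fun w => (hdμ' w).differentiableAt
  have cεt : Continuous εt := dεt.continuous
  have cμt : Continuous μt := dμt.continuous
  have cεt' : Continuous εt' := dεt'.continuous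
  have cμt' : Continuous μt' := dμt'.continuous
  -- bounds on first derivatives
  obtain ⟨Mε, hMε0, hMε⟩ := aux_bounded_of_deriv_integrable εt' εt'' hdε' hεW.2.2
  obtain ⟨Mμ, hMμ0, hMμ⟩ := aux_bounded_of_deriv_integrable μt' μt'' hdμ' hμW.2.2
  -- pointwise bound for η
  have hηb1 : ∀ w, |η w| ≤ (|εt' w| / ε₀ + |μt' w| / μ₀) / 4 := by
    intro w
    calc |η w| = |εt' w / εt w - μt' w / μt w| / 4 := by
          rw [hηf w, abs_div]; norm_num
      _ ≤ (|εt' w / εt w| + |μt' w / μt w|) / 4 := by gcongr; exact abs_sub _ _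
      _ ≤ (|εt' w| / ε₀ + |μt' w| / μ₀) / 4 := by
          rw [abs_div, abs_div, abs_of_pos (hεpos w), abs_of_pos (hμpos w)]
          gcongr
          · exact (hεb w).1
          · exact (hμb w).1
  set Mη : ℝ := (Mε / ε₀ + Mμ / μ₀) / 4 with hMη_def
  have hMη0 : 0 ≤ Mη := by positivity
  have hηb2 : ∀ w, |η w| ≤ Mη := by
    intro w
    refine (hηb1 w).trans ?_
    rw [hMη_def]
    gcongr
    · exact hMε w
    · exact hMμ w
  -- Integrability of η²
  have h1 : Integrable (fun w => η w ^ 2) volume := by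
    have hcη : Continuous η := by
      rw [hη_eq]
      exact ((cεt'.div cεt hεne).sub (cμt'.div cμt hμne)).div_const 4
    refine Integrable.mono'
      ((((hεW.2.1.abs.div_const ε₀).add (hμW.2.1.abs.div_const μ₀)).div_const 4).const_mul Mη)
      (hcη.pow 2).aestronglyMeasurable (Filter.Eventually.of_forall fun w => ?_)
    have : ‖η w ^ 2‖ = |η w| * |η w| := by
      rw [Real.norm_eq_abs, ← abs_mul]; ring_nf
    rw [this]
    exact mul_le_mul (hηb2 w) (hηb1 w) (abs_nonneg _) hMη0
  -- Integrability of deriv η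
  have h2 : Integrable (deriv η) volume := by
    rw [hdη_eq]
    have hmeas : AEStronglyMeasurable (fun w =>
        ((εt'' w * εt w - εt' w * εt' w) / εt w ^ 2
          - (μt'' w * μt w - μt' w * μt' w) / μt w ^ 2) / 4) volume := by
      apply AEMeasurable.aestronglyMeasurable
      apply AEMeasurable.div_const
      apply AEMeasurable.sub
      · exact ((hεW.2.2.aemeasurable.mul cεt.measurable.aemeasurable).sub
          (cεt'.measurable.aemeasurable.mul cεt'.measurable.aemeasurable)).div
          ((cεt.pow 2).measurable.aemeasurable)
      · exact ((hμW.2.2.aemeasurable.mul cμt.measurable.aemeasurable).sub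
          (cμt'.measurable.aemeasurable.mul cμt'.measurable.aemeasurable)).div
          ((cμt.pow 2).measurable.aemeasurable)
    refine Integrable.mono'
      (((((hεW.2.2.abs.mul_const ε₁).add (hεW.2.1.abs.const_mul Mε)).div_const (ε₀ ^ 2)).add
        (((hμW.2.2.abs.mul_const μ₁).add (hμW.2.1.abs.const_mul Mμ)).div_const (μ₀ ^ 2))).div_const 4)
      hmeas (Filter.Eventually.of_forall fun w => ?_)
    rw [Real.norm_eq_abs]
    calc |((εt'' w * εt w - εt' w * εt' w) / εt w ^ 2
          - (μt'' w * μt w - μt' w * μt' w) / μt w ^ 2) / 4|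
        = |(εt'' w * εt w - εt' w * εt' w) / εt w ^ 2
          - (μt'' w * μt w - μt' w * μt' w) / μt w ^ 2| / 4 := by
          rw [abs_div]; norm_num
      _ ≤ (|(εt'' w * εt w - εt' w * εt' w) / εt w ^ 2|
          + |(μt'' w * μt w - μt' w * μt' w) / μt w ^ 2|) / 4 := by
          gcongr; exact abs_sub _ _
      _ ≤ ((|εt'' w| * ε₁ + Mε * |εt' w|) / ε₀ ^ 2
          + (|μt'' w| * μ₁ + Mμ * |μt' w|) / μ₀ ^ 2) / 4 := by
          gcongr
          · exact aux_quot_bound _ _ _ _ _ _ hε₀ (hεb w).1 (hεb w).2 (hMε w)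
          · exact aux_quot_bound _ _ _ _ _ _ hμ₀ (hμb w).1 (hμb w).2 (hMμ w)
  -- Integrability of the zeroth-order part
  have hεspos : 0 < εs := hε₀.trans_le hεs₀
  have hμspos : 0 < μs := hμ₀.trans_le hμs₀
  have h3 : Integrable (fun w => l / (εt w * μt w) - l / (εs * μs)) volume := by
    have hcont : Continuous (fun w => l / (εt w * μt w) - l / (εs * μs)) := by
      refine Continuous.sub ?_ continuous_const
      exact continuous_const.div (cεt.mul cμt) fun w => mul_ne_zero (hεne w) (hμne w)
    refine Integrable.mono'
      (((hεW.1.abs.const_mul μ₁).add (hμW.1.abs.const_mul ε₁)).const_mul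
        (l / ((ε₀ * μ₀) * (ε₀ * μ₀))))
      hcont.aestronglyMeasurable (Filter.Eventually.of_forall fun w => ?_)
    have hXne : (εt w * μt w : ℝ) ≠ 0 := mul_ne_zero (hεne w) (hμne w)
    have hYne : (εs * μs : ℝ) ≠ 0 := (mul_pos hεspos hμspos).ne'
    have hrw : l / (εt w * μt w) - l / (εs * μs)
        = l * (εs * μs - εt w * μt w) / ((εt w * μt w) * (εs * μs)) := by
      rw [div_sub_div _ _ hXne hYne]
      ring
    have key : |εs * μs - εt w * μt w| ≤ μ₁ * |εt w - εs| + ε₁ * |μt w - μs| := by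
      have h : εs * μs - εt w * μt w = μs * (εs - εt w) + εt w * (μs - μt w) := by ring
      rw [h]
      calc |μs * (εs - εt w) + εt w * (μs - μt w)|
          ≤ |μs * (εs - εt w)| + |εt w * (μs - μt w)| := abs_add_le _ _
        _ = μs * |εt w - εs| + εt w * |μt w - μs| := by
            rw [abs_mul, abs_mul, abs_of_pos hμspos, abs_of_pos (hεpos w),
              abs_sub_comm εs (εt w), abs_sub_comm μs (μt w)]
        _ ≤ μ₁ * |εt w - εs| + ε₁ * |μt w - μs| := by
            have h1' : μs * |εt w - εs| ≤ μ₁ * |εt w - εs| :=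
              mul_le_mul_of_nonneg_right hμs₁ (abs_nonneg _)
            have h2' : εt w * |μt w - μs| ≤ ε₁ * |μt w - μs| :=
              mul_le_mul_of_nonneg_right (hεb w).2 (abs_nonneg _)
            linarith
    rw [Real.norm_eq_abs, hrw, abs_div, abs_mul, abs_of_nonneg hl,
      abs_of_pos (mul_pos (mul_pos (hεpos w) (hμpos w)) (mul_pos hεspos hμspos))]
    calc l * |εs * μs - εt w * μt w| / ((εt w * μt w) * (εs * μs))
        ≤ l * (μ₁ * |εt w - εs| + ε₁ * |μt w - μs|) / ((ε₀ * μ₀) * (ε₀ * μ₀)) := by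
          have hμ₁0 : 0 ≤ μ₁ := le_trans hμ₀.le (hμs₀.trans hμs₁)
          have hε₁0 : 0 ≤ ε₁ := le_trans hε₀.le (hεs₀.trans hεs₁)
          apply div_le_div₀
          · exact mul_nonneg hl (add_nonneg (mul_nonneg hμ₁0 (abs_nonneg _))
              (mul_nonneg hε₁0 (abs_nonneg _)))
          · exact mul_le_mul_of_nonneg_left key hl
          · positivity
          · exact mul_le_mul (mul_le_mul (hεb w).1 (hμb w).1 hμ₀.le (hεpos w).le)
              (mul_le_mul hεs₀ hμs₀ hμ₀.le hεspos.le) (by positivity)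
              (mul_nonneg (hεpos w).le (hμpos w).le)
      _ = l / ((ε₀ * μ₀) * (ε₀ * μ₀)) * (μ₁ * |εt w - εs| + ε₁ * |μt w - μs|) := by ring
  -- combine
  have hfun : (fun w => V w - l / (εs * μs))
      = fun w => η w ^ 2 - deriv η w + (l / (εt w * μt w) - l / (εs * μs)) := by
    funext w
    rw [hV w]
    ring
  rw [hfun]
  exact (h1.sub h2).add h3
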